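/- Let τ₁ satisfy τ₁ tanh τ₁ = 1. Then φ(x) = tanh τ₁ − x tanh(τ₁ x) satisfies φ'' + λ e^u φ = 0 on (-1,1) with φ(±1) = 0, where λ = 2τ₁²/cosh²(τ₁) and u(x) = 2 log(cosh τ₁/cosh(τ₁ x)); moreover φ(x) > 0 for −1 < x < 1. -/

import Mathlib

open Real Set

lemma hd_tanh_comp (τ₁ x : ℝ) :
    HasDerivAt (fun y => Real.sinh (τ₁ * y) / Real.cosh (τ₁ * y))
      (τ₁ / Real.cosh (τ₁ * x) ^ 2) x := by
  have hc : HasDerivAt (fun y : ℝ => τ₁ * y) τ₁ x := by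
    simpa using (hasDerivAt_id x).const_mul τ₁
  have hs : HasDerivAt (fun y => Real.sinh (τ₁ * y)) (Real.cosh (τ₁ * x) * τ₁) x :=
    (Real.hasDerivAt_sinh (τ₁ * x)).comp x hc
  have hco : HasDerivAt (fun y => Real.cosh (τ₁ * y)) (Real.sinh (τ₁ * x) * τ₁) x :=
    (Real.hasDerivAt_cosh (τ₁ * x)).comp x hc
  have hne : Real.cosh (τ₁ * x) ≠ 0 := (Real.cosh_pos _).ne'
  have := hs.div hco hne
  refine this.congr_deriv ?_
  have h2 := Real.cosh_sq_sub_sinh_sq (τ₁ * x)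
  field_simp
  linear_combination τ₁ * h2

theorem eigenfunction_zero_eigenvalue (τ₁ : ℝ) (hτ₁ : 0 < τ₁)
    (h1 : τ₁ * Real.tanh τ₁ = 1)
    (lam : ℝ) (hlam : lam = 2 * τ₁ ^ 2 / Real.cosh τ₁ ^ 2)
    (u : ℝ → ℝ) (hu : ∀ x, u x = 2 * Real.log (Real.cosh τ₁ / Real.cosh (τ₁ * x)))
    (φ : ℝ → ℝ) (hφ : ∀ x, φ x = Real.tanh τ₁ - x * Real.tanh (τ₁ * x)) :
    (∀ x ∈ Set.Ioo (-1 : ℝ) 1, deriv (deriv φ) x + lam * Real.exp (u x) * φ x = 0) ∧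
    φ (-1) = 0 ∧ φ 1 = 0 ∧
    (∀ x ∈ Set.Ioo (-1 : ℝ) 1, 0 < φ x) := by
  have hcne : ∀ x : ℝ, Real.cosh x ≠ 0 := fun x => (Real.cosh_pos x).ne'
  -- first derivative
  have hd1 : ∀ x : ℝ, HasDerivAt φ
      (-(Real.sinh (τ₁ * x) / Real.cosh (τ₁ * x)) - x * τ₁ / Real.cosh (τ₁ * x) ^ 2) x := by
    intro x
    have heq : φ = fun y => Real.tanh τ₁ - y * (Real.sinh (τ₁ * y) / Real.cosh (τ₁ * y)) := by
      funext y; simp only [hφ, Real.tanh_eq_sinh_div_cosh]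
    rw [heq]
    have := ((hasDerivAt_id x).mul (hd_tanh_comp τ₁ x)).const_sub (Real.tanh τ₁)
    refine this.congr_deriv ?_
    simp only [id_eq]
    ring
  have hderiv1 : deriv φ = fun x =>
      -(Real.sinh (τ₁ * x) / Real.cosh (τ₁ * x)) - x * τ₁ / Real.cosh (τ₁ * x) ^ 2 := by
    funext x; exact (hd1 x).deriv
  -- second derivative
  have hd2 : ∀ x : ℝ, HasDerivAt (deriv φ)
      (-(τ₁ / Real.cosh (τ₁ * x) ^ 2)
        - (τ₁ * Real.cosh (τ₁ * x) ^ 2 - x * τ₁ * (2 * Real.cosh (τ₁ * x) * (Real.sinh (τ₁ * x) * τ₁)))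
            / (Real.cosh (τ₁ * x) ^ 2) ^ 2) x := by
    intro x
    rw [hderiv1]
    have hc : HasDerivAt (fun y : ℝ => τ₁ * y) τ₁ x := by
      simpa using (hasDerivAt_id x).const_mul τ₁
    have hco : HasDerivAt (fun y => Real.cosh (τ₁ * y)) (Real.sinh (τ₁ * x) * τ₁) x :=
      (Real.hasDerivAt_cosh (τ₁ * x)).comp x hc
    have hcosq : HasDerivAt (fun y => Real.cosh (τ₁ * y) ^ 2)
        (2 * Real.cosh (τ₁ * x) * (Real.sinh (τ₁ * x) * τ₁)) x := by
      have := hco.pow 2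
      refine this.congr_deriv ?_; ring
    have hnum : HasDerivAt (fun y : ℝ => y * τ₁) τ₁ x := by
      simpa using (hasDerivAt_id x).mul_const τ₁
    have hfrac := hnum.div hcosq (pow_ne_zero 2 (hcne _))
    have := ((hd_tanh_comp τ₁ x).neg).sub hfrac
    exact this
  refine ⟨?_, ?_, ?_, ?_⟩
  · intro x hx
    have hdd : deriv (deriv φ) x =
        -(τ₁ / Real.cosh (τ₁ * x) ^ 2)
        - (τ₁ * Real.cosh (τ₁ * x) ^ 2 - x * τ₁ * (2 * Real.cosh (τ₁ * x) * (Real.sinh (τ₁ * x) * τ₁)))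
            / (Real.cosh (τ₁ * x) ^ 2) ^ 2 := (hd2 x).deriv
    have hexp : Real.exp (u x) = (Real.cosh τ₁ / Real.cosh (τ₁ * x)) ^ 2 := by
      rw [hu x]
      rw [show (2 : ℝ) * Real.log (Real.cosh τ₁ / Real.cosh (τ₁ * x)) =
        Real.log (Real.cosh τ₁ / Real.cosh (τ₁ * x)) * 2 by ring]
      rw [Real.exp_mul, Real.exp_log (by positivity)]
      norm_num
    rw [hdd, hexp, hlam, hφ x, Real.tanh_eq_sinh_div_cosh, Real.tanh_eq_sinh_div_cosh]
    have h1' : τ₁ * Real.sinh τ₁ = Real.cosh τ₁ := by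
      rw [Real.tanh_eq_sinh_div_cosh] at h1
      field_simp at h1
      linarith
    have hsq := Real.cosh_sq_sub_sinh_sq (τ₁ * x)
    have hC := hcne τ₁
    have hc := hcne (τ₁ * x)
    field_simp
    linear_combination (2 * Real.cosh (τ₁ * x) * τ₁) * h1'
  · rw [hφ]; simp [Real.tanh_neg]
  · rw [hφ]; simp
  · intro x hx
    rw [hφ x]
    have habs : |x| < 1 := abs_lt.mpr ⟨hx.1, hx.2⟩
    have htpos : 0 < Real.tanh τ₁ := by
      rw [Real.tanh_eq_sinh_div_cosh]
      exact div_pos (by simpa using Real.sinh_lt_sinh.mpr hτ₁) (Real.cosh_pos τ₁)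
    have tanh_mono : ∀ a b : ℝ, a ≤ b → Real.tanh a ≤ Real.tanh b := by
      intro a b hab
      rw [Real.tanh_eq_sinh_div_cosh, Real.tanh_eq_sinh_div_cosh,
        div_le_div_iff₀ (Real.cosh_pos a) (Real.cosh_pos b)]
      have h0 : Real.sinh (a - b) ≤ 0 := by
        simpa using Real.sinh_le_sinh.mpr (by linarith : a - b ≤ 0)
      rw [Real.sinh_sub] at h0
      linarith
    have key : x * Real.tanh (τ₁ * x) = |x| * Real.tanh (τ₁ * |x|) := by
      rcases le_or_gt 0 x with h | h
      · rw [abs_of_nonneg h]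
      · rw [abs_of_neg h, mul_neg, Real.tanh_neg]; ring
    have htnn : 0 ≤ Real.tanh (τ₁ * |x|) := by
      have := tanh_mono 0 (τ₁ * |x|) (by positivity)
      simpa [Real.tanh_eq_sinh_div_cosh] using this
    have hmono : Real.tanh (τ₁ * |x|) ≤ Real.tanh τ₁ :=
      tanh_mono _ _ (by nlinarith [abs_nonneg x, habs.le])
    rw [key]
    nlinarith [abs_nonneg x]
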